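/- For every Borel set E ⊆ [0, a₁) one has λ(E) ≤ μ(E) ≤ c₂·λ(E), where c₂ = 1 + Σ_{n=1}^∞ κ(n)/βⁿ (a finite constant). -/

import Mathlib

open MeasureTheory Set

/-- The greedy β-transformation with deleted digit set `{0, a₁, a₂}`:
`T x = βx` on `Δ(0) = [0, a₁/β)`, `T x = βx − a₁` on `Δ(a₁) = [a₁/β, a₂/β)`,
and `T x = βx − a₂` on `Δ(a₂) = [a₂/β, a₁)`. -/
noncomputable def greedyT (β a₁ a₂ : ℝ) (x : ℝ) : ℝ :=
  if x < a₁ / β then β * x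
  else if x < a₂ / β then β * x - a₁
  else β * x - a₂

/-- The interval `Δ(b)` associated to a digit `b ∈ {0, a₁, a₂}`. -/
noncomputable def digitInt (β a₁ a₂ : ℝ) (b : ℝ) : Set ℝ :=
  if b = 0 then Set.Ico 0 (a₁ / β)
  else if b = a₁ then Set.Ico (a₁ / β) (a₂ / β)
  else Set.Ico (a₂ / β) a₁

/-- The fundamental interval `Δ(w) = ⋂_{k < n} T⁻ᵏ Δ(b_k)` of a word
`w = (b₀, …, b_{n−1})`. -/
noncomputable def cyl (β a₁ a₂ : ℝ) (w : List ℝ) : Set ℝ :=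
  ⋂ k ∈ Finset.range w.length,
    (greedyT β a₁ a₂)^[k] ⁻¹' digitInt β a₁ a₂ (w.getD k 0)

/-- `w` is a word over the alphabet `A = {0, a₁, a₂}`. -/
def isWord (a₁ a₂ : ℝ) (w : List ℝ) : Prop := ∀ b ∈ w, b = 0 ∨ b = a₁ ∨ b = a₂

/-- The fundamental interval `Δ(w)` is full: `λ(Δ(w)) = a₁/β^|w|`. -/
def isFull (β a₁ a₂ : ℝ) (w : List ℝ) : Prop :=
  volume (cyl β a₁ a₂ w) = ENNReal.ofReal (a₁ / β ^ w.length)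

/-- Condition (6): `a₁ · max (β−1) 1 < a₂ < a₁ · min 2 β`. -/
def condition6 (β a₁ a₂ : ℝ) : Prop :=
  a₁ * max (β - 1) 1 < a₂ ∧ a₂ < a₁ * min 2 β

/-- `w ∈ Bₙ`: `w` is a word of length `n` over `A` with `λ(Δ(w)) > 0`, `Δ(w)`
non-full, and `Δ(w′)` non-full for every nonempty proper prefix `w′` of `w`. -/
def memB (β a₁ a₂ : ℝ) (n : ℕ) (w : List ℝ) : Prop :=
  w.length = n ∧ isWord a₁ a₂ w ∧ 0 < volume (cyl β a₁ a₂ w) ∧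
    ¬ isFull β a₁ a₂ w ∧
    ∀ w' : List ℝ, w' ≠ [] → w' <+: w → w' ≠ w → ¬ isFull β a₁ a₂ w'

/-- `κ(n)`: the number of elements of `Bₙ`. -/
noncomputable def kappa (β a₁ a₂ : ℝ) (n : ℕ) : ℕ :=
  {w : List ℝ | memB β a₁ a₂ n w}.ncard

/-- The density `φ = 1 + Σ_{n≥1} Σ_{w ∈ Bₙ} β^(−n)·1_{TⁿΔ(w)}`. -/
noncomputable def phi (β a₁ a₂ : ℝ) (x : ℝ) : ℝ :=
  1 + ∑' n : ℕ, ∑' w : {w : List ℝ // memB β a₁ a₂ (n + 1) w},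
    Set.indicator ((greedyT β a₁ a₂)^[n + 1] '' cyl β a₁ a₂ w.1)
      (fun _ => (β ^ (n + 1))⁻¹) x

/-- The measure `μ` on `[0, a₁)` with density `φ` with respect to Lebesgue
measure: `μ(E) = ∫_E φ dλ` for Borel `E ⊆ [0, a₁)`. -/
noncomputable def muMeas (β a₁ a₂ : ℝ) : Measure ℝ :=
  (volume.restrict (Set.Ico 0 a₁)).withDensity
    fun x => ENNReal.ofReal (phi β a₁ a₂ x)

-- basic lemmas
section
variable {β a₁ a₂ : ℝ}

/-- bundled hypotheses -/
def Hyp (β a₁ a₂ : ℝ) : Prop :=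
  1 < β ∧ 0 < a₁ ∧ a₁ < a₂ ∧ a₂ < 2*a₁ ∧ a₂ < β*a₁ ∧ (β-1)*a₁ < a₂ ∧ β < 3

lemma hyp_of (hβ1 : 1 < β) (hβ3 : β < 3) (ha₁ : 0 < a₁) (h12 : a₁ < a₂)
    (hc : (a₁ * max (β - 1) 1 < a₂ ∧ a₂ < a₁ * min 2 β)) : Hyp β a₁ a₂ := by
  obtain ⟨h1, h2⟩ := hc
  refine ⟨hβ1, ha₁, h12, ?_, ?_, ?_, hβ3⟩
  · calc a₂ < a₁ * min 2 β := h2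
    _ ≤ a₁ * 2 := by nlinarith [min_le_left 2 β]
    _ = 2 * a₁ := by ring
  · calc a₂ < a₁ * min 2 β := h2
    _ ≤ a₁ * β := by nlinarith [min_le_right 2 β]
    _ = β * a₁ := by ring
  · calc (β-1)*a₁ = a₁ * (β-1) := by ring
    _ ≤ a₁ * max (β-1) 1 := by nlinarith [le_max_left (β-1) 1]
    _ < a₂ := h1

lemma digitInt_zero : digitInt β a₁ a₂ 0 = Set.Ico 0 (a₁/β) := by simp [digitInt]

lemma digitInt_one (ha₁ : 0 < a₁) : digitInt β a₁ a₂ a₁ = Set.Ico (a₁/β) (a₂/β) := by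
  simp [digitInt, ha₁.ne']

lemma digitInt_two (ha₂ : 0 < a₂) (h12 : a₁ ≠ a₂) :
    digitInt β a₁ a₂ a₂ = Set.Ico (a₂/β) a₁ := by
  simp [digitInt, ha₂.ne', (Ne.symm h12)]

lemma digitInt_subset (h : Hyp β a₁ a₂) (b : ℝ) : digitInt β a₁ a₂ b ⊆ Set.Ico 0 a₁ := by
  obtain ⟨hβ1, ha₁, h12, h2a, hβa, hβ1a, _⟩ := h
  have hβ0 : (0:ℝ) < β := by linarith
  unfold digitInt
  split_ifs
  · exact Set.Ico_subset_Ico le_rfl (by rw [div_le_iff₀ hβ0]; nlinarith)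
  · have : (0:ℝ) ≤ a₁/β := by positivity
    exact Set.Ico_subset_Ico this (by rw [div_le_iff₀ hβ0]; nlinarith)
  · have : (0:ℝ) ≤ a₂/β := by
      have : (0:ℝ) < a₂ := by linarith
      positivity
    exact Set.Ico_subset_Ico this le_rfl

lemma cyl_nil : cyl β a₁ a₂ [] = Set.univ := by simp [cyl]

lemma cyl_single (b : ℝ) : cyl β a₁ a₂ [b] = digitInt β a₁ a₂ b := by
  simp [cyl]

lemma cyl_append (w : List ℝ) (b : ℝ) :
    cyl β a₁ a₂ (w ++ [b]) =
      cyl β a₁ a₂ w ∩ (greedyT β a₁ a₂)^[w.length] ⁻¹' digitInt β a₁ a₂ b := by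
  unfold cyl
  rw [List.length_append, List.length_singleton, Finset.range_add_one, Finset.set_biInter_insert]
  rw [Set.inter_comm]
  congr 1
  · apply Set.iInter₂_congr
    intro k hk
    rw [List.getD_append _ _ _ _ (Finset.mem_range.mp hk)]
  · congr 1
    rw [List.getD_append_right _ _ _ _ le_rfl]
    simp

lemma cyl_append_subset (w : List ℝ) (b : ℝ) :
    cyl β a₁ a₂ (w ++ [b]) ⊆ cyl β a₁ a₂ w := by
  rw [cyl_append]; exact Set.inter_subset_left

lemma cyl_subset_Ico (h : Hyp β a₁ a₂) (w : List ℝ) (hw : w ≠ []) :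
    cyl β a₁ a₂ w ⊆ Set.Ico 0 a₁ := by
  have h0 : 0 < w.length := List.length_pos_iff.mpr hw
  intro y hy
  unfold cyl at hy
  have := Set.mem_iInter₂.mp hy 0 (Finset.mem_range.mpr h0)
  simpa using digitInt_subset h _ this

end

section
variable {β a₁ a₂ : ℝ}

lemma Tz0 (h : Hyp β a₁ a₂) : ∀ z ∈ Set.Ico (0:ℝ) (a₁/β),
    greedyT β a₁ a₂ z = β*z - β*0 := by
  intro z hz
  unfold greedyT
  rw [if_pos hz.2]; ring

lemma Tz1 (h : Hyp β a₁ a₂) : ∀ z ∈ Set.Ico (a₁/β) (a₂/β),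
    greedyT β a₁ a₂ z = β*z - β*(a₁/β) := by
  obtain ⟨hβ1, ha₁, h12, h2a, hβa, hβ1a, _⟩ := h
  have hβ0 : (0:ℝ) < β := by linarith
  intro z hz
  unfold greedyT
  rw [if_neg (not_lt.mpr hz.1), if_pos hz.2]
  field_simp

lemma Tz2 (h : Hyp β a₁ a₂) : ∀ z ∈ Set.Ico (a₂/β) a₁,
    greedyT β a₁ a₂ z = β*z - β*(a₂/β) := by
  obtain ⟨hβ1, ha₁, h12, h2a, hβa, hβ1a, _⟩ := h
  have hβ0 : (0:ℝ) < β := by linarith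
  intro z hz
  have h1 : a₁/β ≤ a₂/β := by gcongr <;> linarith
  have h2 : β*(a₂/β) = a₂ := by field_simp
  unfold greedyT
  rw [if_neg (by push_neg; linarith [hz.1]), if_neg (not_lt.mpr hz.1), h2]

lemma extend_gen (h : Hyp β a₁ a₂) (w : List ℝ) (n : ℕ) (hn : w.length = n)
    (l x : ℝ) (hx0 : 0 < x)
    (hcyl : cyl β a₁ a₂ w = Set.Ico l (l + x / β^n))
    (hT : ∀ y ∈ cyl β a₁ a₂ w, (greedyT β a₁ a₂)^[n] y = β^n * (y - l))
    (b p q : ℝ) (hpq : digitInt β a₁ a₂ b = Set.Ico p q) (hp : 0 ≤ p)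
    (hTb : ∀ z ∈ Set.Ico p q, greedyT β a₁ a₂ z = β*z - β*p) :
    cyl β a₁ a₂ (w ++ [b]) = Set.Ico (l + p/β^n) (l + (min x q)/β^n) ∧
    ∀ y ∈ cyl β a₁ a₂ (w ++ [b]),
      (greedyT β a₁ a₂)^[n+1] y = β^(n+1) * (y - (l + p/β^n)) := by
  obtain ⟨hβ1, ha₁, h12, h2a, hβa, hβ1a, _⟩ := h
  have hβ0 : (0:ℝ) < β := by linarith
  have hP : (0:ℝ) < β^n := pow_pos hβ0 n
  have hset : cyl β a₁ a₂ (w ++ [b]) = Set.Ico (l + p/β^n) (l + (min x q)/β^n) := by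
    ext y
    rw [cyl_append, hn]
    simp only [Set.mem_inter_iff, Set.mem_preimage, hpq, hcyl, Set.mem_Ico]
    constructor
    · rintro ⟨⟨h1, h2⟩, h3, h4⟩
      have hyc : y ∈ cyl β a₁ a₂ w := by rw [hcyl]; exact ⟨h1, h2⟩
      rw [hT y hyc] at h3 h4
      refine ⟨?_, ?_⟩
      · have : p / β^n ≤ y - l := by rw [div_le_iff₀ hP]; nlinarith
        linarith
      · have h5 : y - l < q / β^n := by rw [lt_div_iff₀ hP]; nlinarith
        have h6 : y - l < x / β^n := by linarith
        have : y - l < min x q / β^n := by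
          rcases min_choice x q with he | he <;> rw [he] <;> assumption
        linarith
    · rintro ⟨h1, h2⟩
      have hpn : 0 ≤ p / β^n := by positivity
      have hminx : min x q / β^n ≤ x / β^n := by gcongr; exact min_le_left _ _
      have hyc : y ∈ cyl β a₁ a₂ w := by
        rw [hcyl]; exact ⟨by linarith, by linarith⟩
      have hycc := hyc
      rw [hcyl, Set.mem_Ico] at hycc
      rw [hT y hyc]
      have hz1 : p ≤ β^n * (y - l) := by
        have : p / β^n ≤ y - l := by linarith
        rw [div_le_iff₀ hP] at this; linarith
      have hz2 : β^n * (y - l) < q := by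
        have : y - l < min x q / β^n := by linarith
        rw [lt_div_iff₀ hP] at this
        nlinarith [min_le_right x q]
      exact ⟨⟨hycc.1, hycc.2⟩, hz1, hz2⟩
  refine ⟨hset, ?_⟩
  intro y hy
  have hyc : y ∈ cyl β a₁ a₂ w := cyl_append_subset _ _ hy
  rw [hset, Set.mem_Ico] at hy
  rw [Function.iterate_succ_apply', hT y hyc]
  have hz1 : p ≤ β^n * (y - l) := by
    have : p / β^n ≤ y - l := by linarith [hy.1]
    rw [div_le_iff₀ hP] at this; linarith
  have hz2 : β^n * (y - l) < q := by
    have : y - l < min x q / β^n := by linarith [hy.2]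
    rw [lt_div_iff₀ hP] at this
    have := this
    nlinarith [min_le_right x q]
  rw [hTb _ ⟨hz1, hz2⟩]
  have hPne : (β:ℝ)^n ≠ 0 := ne_of_gt hP
  field_simp
  ring

end

section
variable {β a₁ a₂ : ℝ}

lemma vol_Ico_shift (l c : ℝ) : volume (Set.Ico l (l + c)) = ENNReal.ofReal c := by
  rw [Real.volume_Ico]; congr 1; ring

lemma mk_data (h : Hyp β a₁ a₂) (v : List ℝ) (m : ℕ) (hm : v.length = m + 1)
    (L d : ℝ) (hset : cyl β a₁ a₂ v = Set.Ico L (L + d / β^m))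
    (haff : ∀ y ∈ cyl β a₁ a₂ v,
      (greedyT β a₁ a₂)^[v.length] y = β^(v.length) * (y - L))
    (hpos : 0 < volume (cyl β a₁ a₂ v)) (hnf : ¬ isFull β a₁ a₂ v)
    (hle : β * d ≤ a₁) :
    ∃ l x : ℝ, 0 < x ∧ x < a₁ ∧
      cyl β a₁ a₂ v = Set.Ico l (l + x / β ^ v.length) ∧
      ∀ y ∈ cyl β a₁ a₂ v, (greedyT β a₁ a₂)^[v.length] y = β ^ v.length * (y - l) := by
  obtain ⟨hβ1, ha₁, h12, h2a, hβa, hβ1a, _⟩ := h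
  have hβ0 : (0:ℝ) < β := by linarith
  have hP : (0:ℝ) < β^m := pow_pos hβ0 m
  have hvol : volume (cyl β a₁ a₂ v) = ENNReal.ofReal (d / β^m) := by
    rw [hset, vol_Ico_shift]
  have hd0 : 0 < d := by
    rw [hvol] at hpos
    have := ENNReal.ofReal_pos.mp hpos
    by_contra hcon
    push_neg at hcon
    have : d / β^m ≤ 0 := div_nonpos_of_nonpos_of_nonneg hcon hP.le
    linarith [ENNReal.ofReal_pos.mp hpos]
  have hkey : d / β^m = (β*d) / β^(m+1) := by
    rw [pow_succ]
    field_simp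
  have hne : β * d ≠ a₁ := by
    intro hcon
    apply hnf
    unfold isFull
    rw [hvol, hm, hkey, hcon]
  refine ⟨L, β*d, by positivity, lt_of_le_of_ne hle hne, ?_, ?_⟩
  · rw [hset, hm, ← hkey]
  · exact haff

lemma struct (h : Hyp β a₁ a₂) (w : List ℝ) (hw : w ≠ []) (hword : isWord a₁ a₂ w)
    (hpos : 0 < volume (cyl β a₁ a₂ w))
    (hnf : ∀ w', w' ≠ [] → w' <+: w → ¬ isFull β a₁ a₂ w') :
    ∃ l x : ℝ, 0 < x ∧ x < a₁ ∧
      cyl β a₁ a₂ w = Set.Ico l (l + x / β ^ w.length) ∧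
      ∀ y ∈ cyl β a₁ a₂ w, (greedyT β a₁ a₂)^[w.length] y = β ^ w.length * (y - l) := by
  have hh := h
  obtain ⟨hβ1, ha₁, h12, h2a, hβa, hβ1a, _⟩ := hh
  have hβ0 : (0:ℝ) < β := by linarith
  have ha₂ : (0:ℝ) < a₂ := by linarith
  induction w using List.reverseRecOn with
  | nil => exact absurd rfl hw
  | append_singleton u b ih =>
    have hbmem : b ∈ u ++ [b] := by simp
    have hb := hword b hbmem
    rcases eq_or_ne u [] with hu | hu
    · -- base case : single letter
      subst hu
      simp only [List.nil_append] at *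
      have hnfb : ¬ isFull β a₁ a₂ [b] := hnf [b] (by simp) (List.prefix_refl _)
      have hlen : ([b] : List ℝ).length = 0 + 1 := by simp
      have haff0 : ∀ p q : ℝ, digitInt β a₁ a₂ b = Set.Ico p q →
          (∀ z ∈ Set.Ico p q, greedyT β a₁ a₂ z = β*z - β*p) →
          ∀ y ∈ cyl β a₁ a₂ [b],
            (greedyT β a₁ a₂)^[([b] : List ℝ).length] y
              = β^(([b] : List ℝ).length) * (y - p) := by
        intro p q hpq hTb y hy
        rw [cyl_single, hpq] at hy
        simp only [List.length_singleton, Function.iterate_one, pow_one]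
        rw [hTb y hy]; ring
      rcases hb with hb | hb | hb <;> subst b
      · -- digit 0
        refine mk_data h _ 0 hlen 0 (a₁/β) ?_ ?_ hpos hnfb ?_
        · rw [cyl_single, digitInt_zero]; norm_num
        · exact haff0 0 (a₁/β) digitInt_zero (by simpa using Tz0 h)
        · rw [mul_div_cancel₀ _ hβ0.ne']
      · -- digit a₁
        refine mk_data h _ 0 hlen (a₁/β) (a₂/β - a₁/β) ?_ ?_ hpos hnfb ?_
        · rw [cyl_single, digitInt_one ha₁]; norm_num
        · exact haff0 (a₁/β) (a₂/β) (digitInt_one ha₁) (Tz1 h)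
        · have : β * (a₂/β - a₁/β) = a₂ - a₁ := by field_simp; try ring
          rw [this]; linarith
      · -- digit a₂
        refine mk_data h _ 0 hlen (a₂/β) (a₁ - a₂/β) ?_ ?_ hpos hnfb ?_
        · rw [cyl_single, digitInt_two ha₂ h12.ne]; norm_num
        · exact haff0 (a₂/β) a₁ (digitInt_two ha₂ h12.ne) (Tz2 h)
        · have : β * (a₁ - a₂/β) = β*a₁ - a₂ := by field_simp; try ring
          rw [this]; linarith
    · -- inductive step
      have hwordu : isWord a₁ a₂ u := fun c hc => hword c (by simp [hc])
      have hposu : 0 < volume (cyl β a₁ a₂ u) :=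
        lt_of_lt_of_le hpos (measure_mono (cyl_append_subset u b))
      have hnfu : ∀ w', w' ≠ [] → w' <+: u → ¬ isFull β a₁ a₂ w' := fun w' h1 h2 =>
        hnf w' h1 (h2.trans (List.prefix_append u [b]))
      obtain ⟨l, x, hx0, hxa, hcyl, hT⟩ := ih hu hwordu hposu hnfu
      set n := u.length with hnu
      have hlen : (u ++ [b]).length = n + 1 := by simp [hnu]
      have hnfv : ¬ isFull β a₁ a₂ (u ++ [b]) :=
        hnf _ (by simp) (List.prefix_refl _)
      have hIco : ∀ p mq : ℝ,
          Set.Ico (l + p/β^n) (l + mq/β^n)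
            = Set.Ico (l + p/β^n) ((l + p/β^n) + (mq - p)/β^n) := by
        intro p mq
        congr 1
        field_simp
        try ring
      rcases hb with hb | hb | hb <;> subst b
      · -- digit 0
        obtain ⟨hset, haff⟩ := extend_gen h u n rfl l x hx0 hcyl hT 0 0 (a₁/β)
          digitInt_zero le_rfl (by simpa using Tz0 h)
        refine mk_data h _ n hlen (l + 0/β^n) (min x (a₁/β) - 0) ?_ ?_ hpos hnfv ?_
        · rw [hset, hIco]
        · intro y hy
          rw [hlen]
          exact haff y hy
        · have h1 : min x (a₁/β) ≤ a₁/β := min_le_right _ _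
          nlinarith [mul_le_mul_of_nonneg_left h1 hβ0.le,
            mul_div_cancel₀ a₁ hβ0.ne']
      · -- digit a₁
        obtain ⟨hset, haff⟩ := extend_gen h u n rfl l x hx0 hcyl hT a₁ (a₁/β) (a₂/β)
          (digitInt_one ha₁) (by positivity) (Tz1 h)
        refine mk_data h _ n hlen (l + (a₁/β)/β^n) (min x (a₂/β) - a₁/β) ?_ ?_ hpos hnfv ?_
        · rw [hset, hIco]
        · intro y hy
          rw [hlen]
          exact haff y hy
        · have h1 : min x (a₂/β) ≤ a₂/β := min_le_right _ _
          have h2 : β * (a₂/β - a₁/β) = a₂ - a₁ := by field_simp; try ring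
          nlinarith [mul_le_mul_of_nonneg_left (sub_le_sub_right h1 (a₁/β)) hβ0.le]
      · -- digit a₂
        obtain ⟨hset, haff⟩ := extend_gen h u n rfl l x hx0 hcyl hT a₂ (a₂/β) a₁
          (digitInt_two ha₂ h12.ne) (by positivity) (Tz2 h)
        refine mk_data h _ n hlen (l + (a₂/β)/β^n) (min x a₁ - a₂/β) ?_ ?_ hpos hnfv ?_
        · rw [hset, hIco]
        · intro y hy
          rw [hlen]
          exact haff y hy
        · have h1 : min x a₁ ≤ a₁ := min_le_right _ _
          have h2 : β * (a₁ - a₂/β) = β*a₁ - a₂ := by field_simp; try ring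
          nlinarith [mul_le_mul_of_nonneg_left (sub_le_sub_right h1 (a₂/β)) hβ0.le]

end

section
variable {β a₁ a₂ : ℝ}

lemma pos_num {u P : ℝ} (hP : 0 < P) (hdiv : 0 < u / P) : 0 < u := by
  have := mul_pos hdiv hP
  rwa [div_mul_cancel₀ _ hP.ne'] at this

/-- the set of digits extending `w` to an element of `B_{n+1}` -/
noncomputable def fiberD (β a₁ a₂ : ℝ) (n : ℕ) (w : List ℝ) : Finset ℝ :=
  @Finset.filter _ (fun b => memB β a₁ a₂ (n+1) (w ++ [b])) (Classical.decPred _)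
    ({0, a₁, a₂} : Finset ℝ)

lemma fiber_bound (h : Hyp β a₁ a₂) (n : ℕ) (hn : 1 ≤ n) (w : List ℝ)
    (hw : memB β a₁ a₂ n w) :
    ∑ b ∈ fiberD β a₁ a₂ n w,
      (a₁/β^(n+1) + (volume (cyl β a₁ a₂ (w ++ [b]))).toReal + (a₁*(β-1)/2)/β^(n+1))
      ≤ a₁/β^n + (volume (cyl β a₁ a₂ w)).toReal := by
  classical
  have hh := h
  obtain ⟨hβ1, ha₁, h12, h2a, hβa, hβ1a, hβ3⟩ := hh
  have hβ0 : (0:ℝ) < β := by linarith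
  have ha₂ : (0:ℝ) < a₂ := by linarith
  have hP : (0:ℝ) < β^n := pow_pos hβ0 n
  have hc' : (0:ℝ) ≤ a₁*(β-1)/2 := by nlinarith
  have h112 : a₁/β ≤ a₂/β := by gcongr <;> linarith
  have hw1 : w.length = n := hw.1
  have hwne : w ≠ [] := by
    intro e; rw [e] at hw1; simp at hw1; omega
  have hnfw : ∀ w', w' ≠ [] → w' <+: w → ¬ isFull β a₁ a₂ w' := by
    intro w' h1 h2
    rcases eq_or_ne w' w with rfl | hne
    · exact hw.2.2.2.1
    · exact hw.2.2.2.2 w' h1 h2 hne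
  obtain ⟨l, x, hx0, hxa, hcyl, hT⟩ := struct h w hwne hw.2.1 hw.2.2.1 hnfw
  rw [hw1] at hcyl hT
  have e0 := extend_gen h w n hw1 l x hx0 hcyl hT 0 0 (a₁/β)
    digitInt_zero le_rfl (by simpa using Tz0 h)
  have e1 := extend_gen h w n hw1 l x hx0 hcyl hT a₁ (a₁/β) (a₂/β)
    (digitInt_one ha₁) (by positivity) (Tz1 h)
  have e2 := extend_gen h w n hw1 l x hx0 hcyl hT a₂ (a₂/β) a₁
    (digitInt_two ha₂ h12.ne) (by positivity) (Tz2 h)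
  have vw : (volume (cyl β a₁ a₂ w)).toReal = x / β^n := by
    rw [hcyl, vol_Ico_shift, ENNReal.toReal_ofReal (by positivity)]
  have v0 : volume (cyl β a₁ a₂ (w++[0]))
      = ENNReal.ofReal ((min x (a₁/β))/β^n) := by
    rw [e0.1, Real.volume_Ico]; congr 1; ring
  have v1 : volume (cyl β a₁ a₂ (w++[a₁]))
      = ENNReal.ofReal ((min x (a₂/β) - a₁/β)/β^n) := by
    rw [e1.1, Real.volume_Ico]; congr 1; ring
  have v2 : volume (cyl β a₁ a₂ (w++[a₂]))
      = ENNReal.ofReal ((min x a₁ - a₂/β)/β^n) := by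
    rw [e2.1, Real.volume_Ico]; congr 1; ring
  have hminxa : min x a₁ = x := min_eq_left hxa.le
  have hfnonneg : ∀ i : ℝ,
      0 ≤ a₁/β^(n+1) + (volume (cyl β a₁ a₂ (w ++ [i]))).toReal
        + (a₁*(β-1)/2)/β^(n+1) := by
    intro i
    have h1 : (0:ℝ) ≤ a₁/β^(n+1) := by positivity
    have h2 : (0:ℝ) ≤ (a₁*(β-1)/2)/β^(n+1) := div_nonneg hc' (by positivity)
    have h3 := ENNReal.toReal_nonneg
      (a := volume (cyl β a₁ a₂ (w ++ [i])))
    linarith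
  have hfull0 : a₁/β ≤ x → isFull β a₁ a₂ (w ++ [0]) := by
    intro hx1
    unfold isFull
    rw [v0, min_eq_right hx1]
    have hlen2 : (w ++ [(0:ℝ)]).length = n+1 := by simp [hw1]
    rw [hlen2]
    congr 1
    rw [pow_succ]
    ring
  rcases le_or_gt x (a₁/β) with hx1 | hx1
  · -- case A : only digit 0 possible
    have hsub : fiberD β a₁ a₂ n w ⊆ {0} := by
      intro b hb
      rw [fiberD, Finset.mem_filter] at hb
      obtain ⟨hbD, hbB⟩ := hb
      simp only [Finset.mem_insert, Finset.mem_singleton] at hbD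
      rcases hbD with hb0 | hb0 | hb0
      · exact Finset.mem_singleton.mpr hb0
      · exfalso
        have hbpos := hbB.2.2.1
        rw [hb0, v1] at hbpos
        have := pos_num hP (ENNReal.ofReal_pos.mp hbpos)
        rw [min_eq_left (le_trans hx1 h112)] at this
        linarith
      · exfalso
        have hbpos := hbB.2.2.1
        rw [hb0, v2] at hbpos
        have h5 := pos_num hP (ENNReal.ofReal_pos.mp hbpos)
        rw [hminxa] at h5
        have h6 : a₁/β < x := by linarith [h112]
        linarith
    calc _ ≤ ∑ b ∈ ({0} : Finset ℝ),
        (a₁/β^(n+1) + (volume (cyl β a₁ a₂ (w ++ [b]))).toReal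
          + (a₁*(β-1)/2)/β^(n+1)) :=
          Finset.sum_le_sum_of_subset_of_nonneg hsub (fun i _ _ => hfnonneg i)
    _ ≤ a₁/β^n + (volume (cyl β a₁ a₂ w)).toReal := by
        rw [Finset.sum_singleton, v0, vw, min_eq_left hx1,
          ENNReal.toReal_ofReal (by positivity), pow_succ]
        have hkey : a₁/(β^n*β) + a₁*(β-1)/2/(β^n*β) ≤ a₁/β^n := by
          rw [← add_div, div_le_div_iff₀ (by positivity) hP]
          nlinarith [mul_le_mul_of_nonneg_right
            (show a₁ + a₁*(β-1)/2 ≤ a₁*β by nlinarith) hP.le]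
        linarith
  · -- digit 0 gives a full cylinder, so 0 ∉ fiber
    have h0notin : (0:ℝ) ∉ fiberD β a₁ a₂ n w := by
      rw [fiberD, Finset.mem_filter]
      rintro ⟨-, hbB⟩
      exact hbB.2.2.2.1 (hfull0 hx1.le)
    rcases le_or_gt x (a₂/β) with hx2 | hx2
    · -- case B : only digit a₁
      have hsub : fiberD β a₁ a₂ n w ⊆ {a₁} := by
        intro b hb
        have hbmem := hb
        rw [fiberD, Finset.mem_filter] at hb
        obtain ⟨hbD, hbB⟩ := hb
        simp only [Finset.mem_insert, Finset.mem_singleton] at hbD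
        rcases hbD with hb0 | hb0 | hb0
        · exact absurd (hb0 ▸ hbmem) h0notin
        · exact Finset.mem_singleton.mpr hb0
        · exfalso
          have hbpos := hbB.2.2.1
          rw [hb0, v2] at hbpos
          have h5 := pos_num hP (ENNReal.ofReal_pos.mp hbpos)
          rw [hminxa] at h5
          linarith
      calc _ ≤ ∑ b ∈ ({a₁} : Finset ℝ),
          (a₁/β^(n+1) + (volume (cyl β a₁ a₂ (w ++ [b]))).toReal
            + (a₁*(β-1)/2)/β^(n+1)) :=
            Finset.sum_le_sum_of_subset_of_nonneg hsub (fun i _ _ => hfnonneg i)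
      _ ≤ a₁/β^n + (volume (cyl β a₁ a₂ w)).toReal := by
          rw [Finset.sum_singleton, v1, vw, min_eq_left hx2,
            ENNReal.toReal_ofReal (div_nonneg (by linarith) hP.le), pow_succ]
          have hsplit : (x - a₁/β)/β^n = x/β^n - a₁/(β^n*β) := by
            field_simp
            try ring
          have hkey : a₁/(β^n*β) + a₁*(β-1)/2/(β^n*β) ≤ a₁/β^n + a₁/(β^n*β) := by
            have : a₁*(β-1)/2/(β^n*β) ≤ a₁/β^n := by
              rw [div_le_div_iff₀ (by positivity) hP]
              nlinarith [mul_le_mul_of_nonneg_right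
                (show a₁*(β-1)/2 ≤ a₁*β by nlinarith) hP.le]
            linarith
          linarith [hsplit, hkey]
    · -- case C : digits a₁ and a₂
      have hsub : fiberD β a₁ a₂ n w ⊆ {a₁, a₂} := by
        intro b hb
        have hbmem := hb
        rw [fiberD, Finset.mem_filter] at hb
        obtain ⟨hbD, hbB⟩ := hb
        simp only [Finset.mem_insert, Finset.mem_singleton] at hbD
        rcases hbD with hb0 | hb0 | hb0
        · exact absurd (hb0 ▸ hbmem) h0notin
        · simp [hb0]
        · simp [hb0]
      calc _ ≤ ∑ b ∈ ({a₁, a₂} : Finset ℝ),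
          (a₁/β^(n+1) + (volume (cyl β a₁ a₂ (w ++ [b]))).toReal
            + (a₁*(β-1)/2)/β^(n+1)) :=
            Finset.sum_le_sum_of_subset_of_nonneg hsub (fun i _ _ => hfnonneg i)
      _ ≤ a₁/β^n + (volume (cyl β a₁ a₂ w)).toReal := by
          rw [Finset.sum_pair h12.ne, v1, v2, vw, min_eq_right hx2.le, hminxa,
            ENNReal.toReal_ofReal (div_nonneg (by linarith) hP.le),
            ENNReal.toReal_ofReal (div_nonneg (by linarith) hP.le), pow_succ]
          have hs1 : (a₂/β - a₁/β)/β^n + (x - a₂/β)/β^n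
              = x/β^n - a₁/(β^n*β) := by
            field_simp
            try ring
          have hkey : 2*(a₁/(β^n*β)) + 2*(a₁*(β-1)/2/(β^n*β)) - a₁/(β^n*β)
              = a₁/β^n := by
            field_simp
            ring
          linarith [hs1, hkey]

lemma not_isFull_nil : ¬ isFull β a₁ a₂ [] := by
  unfold isFull
  rw [cyl_nil, Real.volume_univ]
  exact fun hcon => ENNReal.ofReal_ne_top hcon.symm

lemma cyl_prefix {u v : List ℝ} (hp : u <+: v) :
    cyl β a₁ a₂ v ⊆ cyl β a₁ a₂ u := by
  obtain ⟨t, rfl⟩ := hp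
  intro y hy
  unfold cyl at hy ⊢
  rw [Set.mem_iInter₂] at hy ⊢
  intro k hk
  have hk' : k < u.length := Finset.mem_range.mp hk
  have h2 : k < (u ++ t).length := by rw [List.length_append]; omega
  have := hy k (Finset.mem_range.mpr h2)
  rwa [List.getD_append _ _ _ _ hk'] at this

lemma memB_take {n : ℕ} {v : List ℝ} (hv : memB β a₁ a₂ (n+1) v) :
    memB β a₁ a₂ n (v.take n) := by
  have hl : v.length = n + 1 := hv.1
  have hlt : (v.take n).length = n := by rw [List.length_take, hl]; omega
  refine ⟨hlt, ?_, ?_, ?_, ?_⟩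
  · exact fun b hb => hv.2.1 b (List.take_subset n v hb)
  · exact lt_of_lt_of_le hv.2.2.1 (measure_mono (cyl_prefix (List.take_prefix n v)))
  · rcases Nat.eq_zero_or_pos n with hn | hn
    · subst hn
      rw [List.take_zero]
      exact not_isFull_nil
    · apply hv.2.2.2.2
      · intro e
        rw [e] at hlt
        simp at hlt
        omega
      · exact List.take_prefix n v
      · intro e
        rw [e, hl] at hlt
        omega
  · intro w' h1 h2 _
    apply hv.2.2.2.2 w' h1 (h2.trans (List.take_prefix n v))
    intro e
    have := h2.length_le
    rw [e, hl] at this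
    rw [hlt] at this
    omega

lemma decomp {n : ℕ} {v : List ℝ} (hv : memB β a₁ a₂ (n+1) v) :
    v = v.take n ++ [v.getD n 0] ∧
      (v.getD n 0 = 0 ∨ v.getD n 0 = a₁ ∨ v.getD n 0 = a₂) := by
  have hl : v.length = n + 1 := hv.1
  have hlt : n < v.length := by omega
  have hgd : v.getD n 0 = v[n] := List.getD_eq_getElem v 0 hlt
  constructor
  · conv_lhs => rw [← List.take_append_drop n v]
    congr 1
    rw [List.drop_eq_getElem_cons hlt, hgd]
    congr 1
    apply List.drop_eq_nil_of_le
    omega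
  · exact hv.2.1 _ (hgd ▸ List.getElem_mem hlt)

lemma finB (β a₁ a₂ : ℝ) (n : ℕ) : {w : List ℝ | memB β a₁ a₂ n w}.Finite := by
  induction n with
  | zero =>
    apply Set.Finite.subset (Set.finite_singleton ([] : List ℝ))
    intro w hw
    simp [List.length_eq_zero_iff.mp hw.1]
  | succ n ih =>
    apply Set.Finite.subset
      (((ih.image (fun u => u ++ [(0:ℝ)])).union
        (ih.image (fun u => u ++ [a₁]))).union (ih.image (fun u => u ++ [a₂])))
    intro v hv
    obtain ⟨hdec, hd⟩ := decomp hv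
    have htk : v.take n ∈ {w | memB β a₁ a₂ n w} := memB_take hv
    rcases hd with hh | hh | hh
    · exact Or.inl (Or.inl ⟨_, htk, by dsimp only; rw [← hh]; exact hdec.symm⟩)
    · exact Or.inl (Or.inr ⟨_, htk, by dsimp only; rw [← hh]; exact hdec.symm⟩)
    · exact Or.inr ⟨_, htk, by dsimp only; rw [← hh]; exact hdec.symm⟩

end

noncomputable def Fb (β a₁ a₂ : ℝ) (n : ℕ) : Finset (List ℝ) :=
  (finB β a₁ a₂ n).toFinset

noncomputable def Phi (β a₁ a₂ : ℝ) (n : ℕ) : ℝ :=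
  ∑ w ∈ Fb β a₁ a₂ n, (a₁/β^n + (volume (cyl β a₁ a₂ w)).toReal)

section
variable {β a₁ a₂ : ℝ}

lemma mem_Fb {n : ℕ} {w : List ℝ} : w ∈ Fb β a₁ a₂ n ↔ memB β a₁ a₂ n w := by
  rw [Fb, Set.Finite.mem_toFinset]; rfl

lemma kappa_eq (n : ℕ) : kappa β a₁ a₂ n = (Fb β a₁ a₂ n).card := by
  rw [kappa, Fb, Set.ncard_eq_toFinset_card _ (finB β a₁ a₂ n)]

lemma Phi_nonneg (h : Hyp β a₁ a₂) (n : ℕ) : 0 ≤ Phi β a₁ a₂ n := by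
  obtain ⟨hβ1, ha₁, _⟩ := h
  apply Finset.sum_nonneg
  intro w _
  have h1 : (0:ℝ) ≤ a₁/β^n := by positivity
  linarith [ENNReal.toReal_nonneg (a := volume (cyl β a₁ a₂ w))]

lemma phi_step (h : Hyp β a₁ a₂) (n : ℕ) (hn : 1 ≤ n) :
    Phi β a₁ a₂ (n+1) + (a₁*(β-1)/2) * (kappa β a₁ a₂ (n+1) : ℝ) / β^(n+1)
      ≤ Phi β a₁ a₂ n := by
  classical
  have hmaps : ∀ v ∈ Fb β a₁ a₂ (n+1), v.take n ∈ Fb β a₁ a₂ n :=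
    fun v hv => mem_Fb.mpr (memB_take (mem_Fb.mp hv))
  have heq1 : Phi β a₁ a₂ (n+1)
      + (a₁*(β-1)/2) * (kappa β a₁ a₂ (n+1) : ℝ) / β^(n+1)
      = ∑ v ∈ Fb β a₁ a₂ (n+1),
        (a₁/β^(n+1) + (volume (cyl β a₁ a₂ v)).toReal + (a₁*(β-1)/2)/β^(n+1)) := by
    rw [Finset.sum_add_distrib, Finset.sum_const, nsmul_eq_mul, Phi, kappa_eq]
    ring
  rw [heq1, ← Finset.sum_fiberwise_of_maps_to hmaps]
  apply Finset.sum_le_sum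
  intro w hw
  have hwB := mem_Fb.mp hw
  have hwlen : w.length = n := hwB.1
  have himg : (Fb β a₁ a₂ (n+1)).filter (fun v => v.take n = w)
      = (fiberD β a₁ a₂ n w).image (fun b => w ++ [b]) := by
    ext v
    simp only [Finset.mem_filter, Finset.mem_image, fiberD]
    constructor
    · rintro ⟨hv1, hv2⟩
      have hv1' := mem_Fb.mp hv1
      obtain ⟨hdec, hd⟩ := decomp hv1'
      rw [hv2] at hdec
      refine ⟨v.getD n 0, ⟨?_, ?_⟩, ?_⟩
      · simp only [Finset.mem_insert, Finset.mem_singleton]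
        exact hd
      · rw [← hdec]
        exact hv1'
      · exact hdec.symm
    · rintro ⟨b, ⟨hbD, hbB⟩, rfl⟩
      refine ⟨mem_Fb.mpr hbB, ?_⟩
      rw [← hwlen]
      exact List.take_left
  rw [himg, Finset.sum_image (fun b _ b' _ e => by
    simpa using List.append_cancel_left e)]
  exact fiber_bound h n hn w hwB

lemma Fb_one_subset : Fb β a₁ a₂ 1 ⊆ {[0], [a₁], [a₂]} := by
  intro w hw
  have hwB := mem_Fb.mp hw
  obtain ⟨hdec, hd⟩ := decomp (n := 0) hwB
  simp only [List.take_zero, List.nil_append] at hdec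
  simp only [Finset.mem_insert, Finset.mem_singleton]
  rcases hd with hh | hh | hh
  · exact Or.inl (by rw [hdec, hh])
  · exact Or.inr (Or.inl (by rw [hdec, hh]))
  · exact Or.inr (Or.inr (by rw [hdec, hh]))

lemma kappa_one_le : (kappa β a₁ a₂ 1 : ℝ) ≤ 3 := by
  have h1 := Finset.card_le_card (Fb_one_subset (β := β) (a₁ := a₁) (a₂ := a₂))
  have h2 : ({[0], [a₁], [a₂]} : Finset (List ℝ)).card ≤ 3 := by
    apply le_trans (Finset.card_insert_le _ _)
    have := Finset.card_insert_le ([a₁]) ({[a₂]} : Finset (List ℝ))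
    simp at this ⊢
    omega
  rw [kappa_eq]
  exact_mod_cast le_trans h1 h2

lemma mvol_le (h : Hyp β a₁ a₂) {n : ℕ} {w : List ℝ} (hw : memB β a₁ a₂ n w)
    (hn : 1 ≤ n) : (volume (cyl β a₁ a₂ w)).toReal ≤ a₁ := by
  have hh := h
  obtain ⟨hβ1, ha₁, _⟩ := hh
  have hwne : w ≠ [] := by
    intro e
    have := hw.1
    rw [e] at this
    simp at this
    omega
  have h1 : volume (cyl β a₁ a₂ w) ≤ ENNReal.ofReal a₁ := by
    calc volume (cyl β a₁ a₂ w) ≤ volume (Set.Ico 0 a₁) :=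
      measure_mono (cyl_subset_Ico h w hwne)
    _ = ENNReal.ofReal a₁ := by rw [Real.volume_Ico, sub_zero]
  exact ENNReal.toReal_le_of_le_ofReal ha₁.le h1

lemma Phi_one_le (h : Hyp β a₁ a₂) : Phi β a₁ a₂ 1 ≤ 3*(a₁/β + a₁) := by
  have hh := h
  obtain ⟨hβ1, ha₁, _⟩ := hh
  have hβ0 : (0:ℝ) < β := by linarith
  calc Phi β a₁ a₂ 1 ≤ ∑ _w ∈ Fb β a₁ a₂ 1, (a₁/β + a₁) := by
        apply Finset.sum_le_sum
        intro w hw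
        have := mvol_le h (mem_Fb.mp hw) le_rfl
        simp only [pow_one]
        linarith
  _ = (Fb β a₁ a₂ 1).card * (a₁/β + a₁) := by
        rw [Finset.sum_const, nsmul_eq_mul]
  _ ≤ 3*(a₁/β + a₁) := by
        have h1 := Finset.card_le_card (Fb_one_subset (β := β) (a₁ := a₁) (a₂ := a₂))
        have h2 : ((Fb β a₁ a₂ 1).card : ℝ) ≤ 3 := by
          have := kappa_one_le (β := β) (a₁ := a₁) (a₂ := a₂)
          rwa [kappa_eq] at this
        have h3 : (0:ℝ) ≤ a₁/β + a₁ := by positivity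
        nlinarith

lemma summable_t (h : Hyp β a₁ a₂) :
    Summable (fun n : ℕ => (kappa β a₁ a₂ (n+1) : ℝ)/β^(n+1)) := by
  have hh := h
  obtain ⟨hβ1, ha₁, _⟩ := hh
  have hβ0 : (0:ℝ) < β := by linarith
  set c' := a₁*(β-1)/2 with hc'def
  have hc'0 : 0 < c' := by rw [hc'def]; nlinarith
  set t := fun n : ℕ => (kappa β a₁ a₂ (n+1) : ℝ)/β^(n+1) with htdef
  have ht0 : ∀ n, 0 ≤ t n := by
    intro n
    rw [htdef]
    positivity
  have hH : ∀ N : ℕ, c' * (∑ n ∈ Finset.range (N+1), t n) + Phi β a₁ a₂ (N+1)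
      ≤ c' * t 0 + Phi β a₁ a₂ 1 := by
    intro N
    induction N with
    | zero => rw [Finset.sum_range_one]
    | succ N ihh =>
      rw [Finset.sum_range_succ, mul_add]
      have hstep := phi_step h (N+1) (by omega)
      have he : c' * t (N+1) = c' * (kappa β a₁ a₂ (N+1+1) : ℝ) / β^(N+1+1) := by
        rw [htdef]; ring
      linarith [hstep, ihh, he]
  apply summable_of_sum_range_le (c := t 0 + Phi β a₁ a₂ 1 / c') ht0
  intro N
  match N with
  | 0 =>
    simp only [Finset.range_zero, Finset.sum_empty]
    have := Phi_nonneg h 1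
    positivity
  | (N+1) =>
    have hHN := hH N
    have hPnn := Phi_nonneg h (N+1)
    rw [← sub_nonneg]
    have h1 : c' * (∑ n ∈ Finset.range (N+1), t n) ≤ c' * t 0 + Phi β a₁ a₂ 1 := by
      linarith
    have h2 : (∑ n ∈ Finset.range (N+1), t n) ≤ t 0 + Phi β a₁ a₂ 1 / c' := by
      rw [← mul_le_mul_iff_right₀ hc'0]
      calc c' * (∑ n ∈ Finset.range (N+1), t n) ≤ c' * t 0 + Phi β a₁ a₂ 1 := h1
      _ = c' * (t 0 + Phi β a₁ a₂ 1 / c') := by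
          field_simp
          try ring
    linarith
end


section
variable {β a₁ a₂ : ℝ}

lemma inner_nonneg (h : Hyp β a₁ a₂) (n : ℕ) (x : ℝ) :
    0 ≤ ∑' w : {w : List ℝ // memB β a₁ a₂ (n + 1) w},
      Set.indicator ((greedyT β a₁ a₂)^[n + 1] '' cyl β a₁ a₂ w.1)
        (fun _ => (β ^ (n + 1))⁻¹) x := by
  obtain ⟨hβ1, _⟩ := h
  have hβ0 : (0:ℝ) < β := by linarith
  exact tsum_nonneg fun w => Set.indicator_nonneg (fun _ _ => by positivity) x

lemma inner_le (h : Hyp β a₁ a₂) (n : ℕ) (x : ℝ) :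
    (∑' w : {w : List ℝ // memB β a₁ a₂ (n + 1) w},
      Set.indicator ((greedyT β a₁ a₂)^[n + 1] '' cyl β a₁ a₂ w.1)
        (fun _ => (β ^ (n + 1))⁻¹) x)
      ≤ (kappa β a₁ a₂ (n+1) : ℝ) / β^(n+1) := by
  have hh := h
  obtain ⟨hβ1, _⟩ := hh
  have hβ0 : (0:ℝ) < β := by linarith
  haveI : Finite {w : List ℝ // memB β a₁ a₂ (n + 1) w} :=
    (finB β a₁ a₂ (n+1)).to_subtype
  haveI := Fintype.ofFinite {w : List ℝ // memB β a₁ a₂ (n + 1) w}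
  rw [tsum_fintype]
  have hcard : (Nat.card {w : List ℝ // memB β a₁ a₂ (n + 1) w})
      = kappa β a₁ a₂ (n+1) := by
    rw [kappa, ← Nat.card_coe_set_eq]
    rfl
  calc ∑ w : {w : List ℝ // memB β a₁ a₂ (n + 1) w},
      Set.indicator ((greedyT β a₁ a₂)^[n + 1] '' cyl β a₁ a₂ w.1)
        (fun _ => (β ^ (n + 1))⁻¹) x
      ≤ ∑ _w : {w : List ℝ // memB β a₁ a₂ (n + 1) w}, (β ^ (n + 1))⁻¹ := by
        apply Finset.sum_le_sum
        intro i _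
        exact Set.indicator_apply_le' (fun _ => le_rfl) (fun _ => by positivity)
  _ = (Nat.card {w : List ℝ // memB β a₁ a₂ (n + 1) w}) * (β ^ (n + 1))⁻¹ := by
        rw [Finset.sum_const, nsmul_eq_mul, Finset.card_univ, Nat.card_eq_fintype_card]
  _ = (kappa β a₁ a₂ (n+1) : ℝ) / β^(n+1) := by
        rw [hcard, div_eq_mul_inv]

lemma phi_ge_one (h : Hyp β a₁ a₂) (x : ℝ) : 1 ≤ phi β a₁ a₂ x := by
  unfold phi
  have := tsum_nonneg (L := SummationFilter.unconditional ℕ) (fun n => inner_nonneg h n x)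
  linarith

lemma phi_le (h : Hyp β a₁ a₂) (x : ℝ) :
    phi β a₁ a₂ x ≤ 1 + ∑' n : ℕ, (kappa β a₁ a₂ (n+1) : ℝ) / β^(n+1) := by
  unfold phi
  have hsum : Summable (fun n : ℕ =>
      ∑' w : {w : List ℝ // memB β a₁ a₂ (n + 1) w},
        Set.indicator ((greedyT β a₁ a₂)^[n + 1] '' cyl β a₁ a₂ w.1)
          (fun _ => (β ^ (n + 1))⁻¹) x) :=
    Summable.of_nonneg_of_le (fun n => inner_nonneg h n x)
      (fun n => inner_le h n x) (summable_t h)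
  have := Summable.tsum_le_tsum (fun n => inner_le h n x) hsum (summable_t h)
  linarith
end


/-- For every Borel set `E ⊆ [0, a₁)` one has
`λ(E) ≤ μ(E) ≤ c₂·λ(E)`, where `c₂ = 1 + Σ_{n≥1} κ(n)/βⁿ` (a finite constant). -/
theorem stmt13 (β a₁ a₂ : ℝ) (hβ1 : 1 < β) (hβ3 : β < 3)
    (ha₁ : 0 < a₁) (h12 : a₁ < a₂) (hc : condition6 β a₁ a₂) :
    ∀ E : Set ℝ, E ⊆ Set.Ico 0 a₁ → MeasurableSet E →
      volume E ≤ muMeas β a₁ a₂ E ∧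
      muMeas β a₁ a₂ E ≤
        ENNReal.ofReal (1 + ∑' n : ℕ, (kappa β a₁ a₂ (n + 1) : ℝ) / β ^ (n + 1))
          * volume E := by
  intro E hEsub hE
  have h : Hyp β a₁ a₂ := hyp_of hβ1 hβ3 ha₁ h12 ⟨hc.1, hc.2⟩
  have hmu : muMeas β a₁ a₂ E
      = ∫⁻ x in E, ENNReal.ofReal (phi β a₁ a₂ x) ∂volume := by
    rw [muMeas, withDensity_apply _ hE, Measure.restrict_restrict hE,
      Set.inter_eq_self_of_subset_left hEsub]
  constructor
  · rw [hmu]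
    calc volume E = ∫⁻ _ in E, 1 ∂volume := (setLIntegral_one E).symm
    _ ≤ ∫⁻ x in E, ENNReal.ofReal (phi β a₁ a₂ x) ∂volume := by
        apply lintegral_mono
        intro x
        rw [show (1:ENNReal) = ENNReal.ofReal 1 from ENNReal.ofReal_one.symm]
        exact ENNReal.ofReal_le_ofReal (phi_ge_one h x)
  · rw [hmu]
    calc ∫⁻ x in E, ENNReal.ofReal (phi β a₁ a₂ x) ∂volume
        ≤ ∫⁻ _ in E, ENNReal.ofReal
            (1 + ∑' n : ℕ, (kappa β a₁ a₂ (n + 1) : ℝ) / β ^ (n + 1)) ∂volume := by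
          apply lintegral_mono
          intro x
          exact ENNReal.ofReal_le_ofReal (phi_le h x)
    _ = ENNReal.ofReal (1 + ∑' n : ℕ, (kappa β a₁ a₂ (n + 1) : ℝ) / β ^ (n + 1))
          * volume E := by
        rw [setLIntegral_const]
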